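/- The circumcenter of mass satisfies the Archimedes Lemma: if a polygon P is cut by a polygonal line into two polygons Q and R, then A(P)·CCM(P) = A(Q)·CCM(Q) + A(R)·CCM(R), where A denotes signed area. -/

import Mathlib

open Finset

/-- 2×2 determinant of two plane vectors. -/
noncomputable def det2 (u v : ℝ × ℝ) : ℝ := u.1 * v.2 - u.2 * v.1

/-- Signed area of the oriented triangle `A B C`. -/
noncomputable def sarea (A B C : ℝ × ℝ) : ℝ := det2 (B - A) (C - A) / 2

/-- Squared Euclidean distance in the plane. -/
noncomputable def sqd (P Q : ℝ × ℝ) : ℝ := (P.1 - Q.1) ^ 2 + (P.2 - Q.2) ^ 2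

/-- `O` is equidistant from the three vertices `A`, `B`, `C`. -/
def isCircumcenter (O A B C : ℝ × ℝ) : Prop := sqd O A = sqd O B ∧ sqd O A = sqd O C

/-- `i`-th vertex of the closed polygon with vertex list `L`, indices cyclic. -/
noncomputable def cyc (L : List (ℝ × ℝ)) (i : ℕ) : ℝ × ℝ := L.getD (i % L.length) 0

/-- All triangles `O Wᵢ Wᵢ₊₁` of the triangulation of the polygon `L` from `O`
are nondegenerate. -/
def triNondeg (O : ℝ × ℝ) (L : List (ℝ × ℝ)) : Prop :=
  ∀ i ∈ Finset.range L.length, sarea O (cyc L i) (cyc L (i + 1)) ≠ 0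

/-- Total signed area of the polygon `L`, triangulated from `O`. -/
noncomputable def asum (O : ℝ × ℝ) (L : List (ℝ × ℝ)) : ℝ :=
  ∑ i ∈ Finset.range L.length, sarea O (cyc L i) (cyc L (i + 1))

/-- The circumcenter of mass of the polygon `L`, triangulated from the point `O`,
where `cc` is a function assigning to each (nondegenerate) triangle its circumcenter. -/
noncomputable def ccmList (cc : ℝ × ℝ → ℝ × ℝ → ℝ × ℝ → ℝ × ℝ) (O : ℝ × ℝ)
    (L : List (ℝ × ℝ)) : ℝ × ℝ :=
  (asum O L)⁻¹ • ∑ i ∈ Finset.range L.length,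
    sarea O (cyc L i) (cyc L (i + 1)) • cc O (cyc L i) (cyc L (i + 1))

section
variable {α : Type*} {M : Type*} [AddCommGroup M]

noncomputable def chainSum (g : α → α → M) : List α → M
  | [] => 0
  | [_] => 0
  | a :: b :: t => g a b + chainSum g (b :: t)

lemma chainSum_single (g : α → α → M) (a : α) : chainSum g [a] = 0 := rfl
lemma chainSum_cons2 (g : α → α → M) (a b : α) (t : List α) :
    chainSum g (a :: b :: t) = g a b + chainSum g (b :: t) := rfl

lemma chainSum_append (g : α → α → M) (x : α) (B : List α) :
    ∀ A : List α, chainSum g (A ++ x :: B) = chainSum g (A ++ [x]) + chainSum g (x :: B)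
  | [] => by simp [chainSum_single]
  | [a] => by simp [chainSum_cons2, chainSum_single, add_assoc]
  | a :: a' :: A => by
    have ih := chainSum_append g x B (a' :: A)
    simp only [List.cons_append, chainSum_cons2] at *
    rw [ih]; abel

lemma chainSum_reverse (g : α → α → M) :
    ∀ W : List α, List.Chain' (fun a b => g b a = - g a b) W →
      chainSum g W.reverse = - chainSum g W
  | [], _ => by simp [chainSum]
  | [a], _ => by simp [chainSum_single]
  | a :: b :: t, h => by
    obtain ⟨hab, h'⟩ := List.isChain_cons_cons.mp h
    have ih := chainSum_reverse g (b :: t) h'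
    have e : (a :: b :: t).reverse = t.reverse ++ b :: [a] := by simp
    rw [e, chainSum_append, chainSum_cons2 g b a [], chainSum_single]
    have e2 : t.reverse ++ [b] = (b :: t).reverse := by simp
    rw [e2, ih, chainSum_cons2, hab]; abel

lemma chainSum_eq_sum (g : α → α → M) (d : α) :
    ∀ W : List α, chainSum g W = ∑ i ∈ range (W.length - 1), g (W.getD i d) (W.getD (i+1) d)
  | [] => by simp [chainSum]
  | [a] => by simp [chainSum_single]
  | a :: b :: t => by
    have ih := chainSum_eq_sum g d (b :: t)
    rw [chainSum_cons2, ih]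
    have hlen : (a :: b :: t).length - 1 = ((b :: t).length - 1) + 1 := by simp
    rw [hlen, Finset.sum_range_succ']
    rw [add_comm]
    congr 1

end

lemma cyc_sum_eq_chain {M : Type*} [AddCommGroup M] (g : ℝ × ℝ → ℝ × ℝ → M)
    (a : ℝ × ℝ) (T : List (ℝ × ℝ)) :
    ∑ i ∈ range (a :: T).length, g (cyc (a :: T) i) (cyc (a :: T) (i+1))
      = chainSum g ((a :: T) ++ [a]) := by
  set L := a :: T with hL
  have hn : 0 < L.length := by simp [hL]
  rw [chainSum_eq_sum g 0]
  have hlen : (L ++ [a]).length - 1 = L.length := by simp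
  rw [hlen]
  apply Finset.sum_congr rfl
  intro i hi
  rw [Finset.mem_range] at hi
  have e1 : cyc L i = (L ++ [a]).getD i 0 := by
    rw [cyc, Nat.mod_eq_of_lt hi, List.getD_append _ _ _ _ hi]
  have e2 : cyc L (i+1) = (L ++ [a]).getD (i+1) 0 := by
    rcases lt_or_eq_of_le (Nat.succ_le_of_lt hi) with h | h
    · rw [cyc, Nat.mod_eq_of_lt h, List.getD_append _ _ _ _ h]
    · have h' : i + 1 = L.length := h
      rw [cyc, h', Nat.mod_self, List.getD_append_right _ _ _ _ (le_refl _)]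
      simp [hL]

  rw [e1, e2]

lemma circ_unique {c1 c2 O a b : ℝ × ℝ} (h : sarea O a b ≠ 0)
    (h1 : isCircumcenter c1 O a b) (h2 : isCircumcenter c2 O a b) : c1 = c2 := by
  obtain ⟨h1a, h1b⟩ := h1
  obtain ⟨h2a, h2b⟩ := h2
  simp only [sqd] at h1a h1b h2a h2b
  have hd : (a.1 - O.1) * (b.2 - O.2) - (a.2 - O.2) * (b.1 - O.1) ≠ 0 := by
    simp only [sarea, det2] at h
    intro hc; apply h
    simp [Prod.fst_sub, Prod.snd_sub]
    linarith [hc]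
  have hx : (c1.1 - c2.1) * ((a.1 - O.1) * (b.2 - O.2) - (a.2 - O.2) * (b.1 - O.1)) = 0 := by
    linear_combination ((b.2 - O.2)/2) * h1a - ((b.2 - O.2)/2) * h2a - ((a.2 - O.2)/2) * h1b + ((a.2 - O.2)/2) * h2b
  have hy : (c1.2 - c2.2) * ((a.1 - O.1) * (b.2 - O.2) - (a.2 - O.2) * (b.1 - O.1)) = 0 := by
    linear_combination (-(b.1 - O.1)/2) * h1a + ((b.1 - O.1)/2) * h2a + ((a.1 - O.1)/2) * h1b - ((a.1 - O.1)/2) * h2b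
  refine Prod.ext ?_ ?_
  · rcases mul_eq_zero.mp hx with h' | h'
    · linarith [sub_eq_zero.mp h']
    · exact absurd h' hd
  · rcases mul_eq_zero.mp hy with h' | h'
    · linarith [sub_eq_zero.mp h']
    · exact absurd h' hd

lemma sarea_swap (O a b : ℝ × ℝ) : sarea O b a = - sarea O a b := by
  simp only [sarea, det2, Prod.fst_sub, Prod.snd_sub]; ring

lemma g_antisym (cc : ℝ × ℝ → ℝ × ℝ → ℝ × ℝ → ℝ × ℝ)
    (hcc : ∀ A B C : ℝ × ℝ, sarea A B C ≠ 0 → isCircumcenter (cc A B C) A B C)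
    (O a b : ℝ × ℝ) (h : sarea O a b ≠ 0) :
    sarea O b a • cc O b a = - (sarea O a b • cc O a b) := by
  have hs : sarea O b a = - sarea O a b := sarea_swap O a b
  have h' : sarea O b a ≠ 0 := by rw [hs]; exact neg_ne_zero.mpr h
  have c1 := hcc O a b h
  have c2 := hcc O b a h'
  have c2' : isCircumcenter (cc O b a) O a b := ⟨c2.2, c2.1⟩
  have e : cc O a b = cc O b a := circ_unique h c1 c2'
  rw [hs, ← e, neg_smul]

set_option maxHeartbeats 1000000 in
/-- Archimedes' Lemma for the circumcenter of mass: cutting the polygon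
`P = V₀ V₁ … V_{n-1}` along the polygonal line `V₀ X₁ … X_m V_k` into
`Q = V₀ … V_k X_m … X₁` and `R = V₀ X₁ … X_m V_k V_{k+1} … V_{n-1}` gives
`A(P)·CCM(P) = A(Q)·CCM(Q) + A(R)·CCM(R)`. -/
theorem stmt8 (cc : ℝ × ℝ → ℝ × ℝ → ℝ × ℝ → ℝ × ℝ)
    (hcc : ∀ A B C : ℝ × ℝ, sarea A B C ≠ 0 → isCircumcenter (cc A B C) A B C)
    (O V0 Vk : ℝ × ℝ) (M1 M2 X : List (ℝ × ℝ))
    (P Q R : List (ℝ × ℝ))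
    (hP : P = V0 :: (M1 ++ [Vk] ++ M2))
    (hQ : Q = V0 :: (M1 ++ [Vk] ++ X.reverse))
    (hR : R = V0 :: (X ++ [Vk] ++ M2))
    (hndP : triNondeg O P) (hndQ : triNondeg O Q) (hndR : triNondeg O R)
    (hAP : asum O P ≠ 0) (hAQ : asum O Q ≠ 0) (hAR : asum O R ≠ 0) :
    asum O P • ccmList cc O P = asum O Q • ccmList cc O Q + asum O R • ccmList cc O R := by
  have key : ∀ L : List (ℝ × ℝ), asum O L ≠ 0 → asum O L • ccmList cc O L
      = ∑ i ∈ range L.length, sarea O (cyc L i) (cyc L (i+1)) • cc O (cyc L i) (cyc L (i+1)) :=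
    fun L hL => by rw [ccmList, smul_inv_smul₀ hL]
  rw [key P hAP, key Q hAQ, key R hAR]
  subst hP hQ hR
  have SP : (∑ i ∈ range (V0 :: (M1 ++ [Vk] ++ M2)).length,
      sarea O (cyc (V0 :: (M1 ++ [Vk] ++ M2)) i) (cyc (V0 :: (M1 ++ [Vk] ++ M2)) (i+1)) •
        cc O (cyc (V0 :: (M1 ++ [Vk] ++ M2)) i) (cyc (V0 :: (M1 ++ [Vk] ++ M2)) (i+1)))
      = chainSum (fun u v => sarea O u v • cc O u v) ((V0 :: (M1 ++ [Vk] ++ M2)) ++ [V0]) :=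
    cyc_sum_eq_chain (fun u v => sarea O u v • cc O u v) V0 (M1 ++ [Vk] ++ M2)
  have SQ : (∑ i ∈ range (V0 :: (M1 ++ [Vk] ++ X.reverse)).length,
      sarea O (cyc (V0 :: (M1 ++ [Vk] ++ X.reverse)) i) (cyc (V0 :: (M1 ++ [Vk] ++ X.reverse)) (i+1)) •
        cc O (cyc (V0 :: (M1 ++ [Vk] ++ X.reverse)) i) (cyc (V0 :: (M1 ++ [Vk] ++ X.reverse)) (i+1)))
      = chainSum (fun u v => sarea O u v • cc O u v) ((V0 :: (M1 ++ [Vk] ++ X.reverse)) ++ [V0]) :=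
    cyc_sum_eq_chain (fun u v => sarea O u v • cc O u v) V0 (M1 ++ [Vk] ++ X.reverse)
  have SR : (∑ i ∈ range (V0 :: (X ++ [Vk] ++ M2)).length,
      sarea O (cyc (V0 :: (X ++ [Vk] ++ M2)) i) (cyc (V0 :: (X ++ [Vk] ++ M2)) (i+1)) •
        cc O (cyc (V0 :: (X ++ [Vk] ++ M2)) i) (cyc (V0 :: (X ++ [Vk] ++ M2)) (i+1)))
      = chainSum (fun u v => sarea O u v • cc O u v) ((V0 :: (X ++ [Vk] ++ M2)) ++ [V0]) :=
    cyc_sum_eq_chain (fun u v => sarea O u v • cc O u v) V0 (X ++ [Vk] ++ M2)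
  rw [SP, SQ, SR]
  set g : ℝ × ℝ → ℝ × ℝ → ℝ × ℝ := fun u v => sarea O u v • cc O u v with hg
  have eP : (V0 :: (M1 ++ [Vk] ++ M2)) ++ [V0] = (V0 :: M1) ++ Vk :: (M2 ++ [V0]) := by simp
  have eQ : (V0 :: (M1 ++ [Vk] ++ X.reverse)) ++ [V0]
      = (V0 :: M1) ++ Vk :: (X.reverse ++ [V0]) := by simp
  have eR : (V0 :: (X ++ [Vk] ++ M2)) ++ [V0] = (V0 :: X) ++ Vk :: (M2 ++ [V0]) := by simp
  rw [eP, eQ, eR, chainSum_append g Vk (M2 ++ [V0]) (V0 :: M1),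
    chainSum_append g Vk (X.reverse ++ [V0]) (V0 :: M1),
    chainSum_append g Vk (M2 ++ [V0]) (V0 :: X)]
  -- cancellation of the cut
  have hrev : chainSum g (Vk :: (X.reverse ++ [V0])) = - chainSum g ((V0 :: X) ++ [Vk]) := by
    have e : Vk :: (X.reverse ++ [V0]) = ((V0 :: X) ++ [Vk]).reverse := by simp
    rw [e]
    apply chainSum_reverse
    refine List.isChain_iff_getElem.mpr ?_
    intro i hi
    set W : List (ℝ × ℝ) := (V0 :: X) ++ [Vk] with hW
    have hWlen : W.length = X.length + 2 := by simp [hW]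
    have hi' : i < X.length + 1 := by
      have := hi; rw [hWlen] at this; omega
    have hRlen : (V0 :: (X ++ [Vk] ++ M2)).length = X.length + 2 + M2.length := by simp; omega
    have hiR : i ∈ range (V0 :: (X ++ [Vk] ++ M2)).length := by
      rw [Finset.mem_range, hRlen]; omega
    have hnd := hndR i hiR
    have hWR : V0 :: (X ++ [Vk] ++ M2) = W ++ M2 := by simp [hW]
    have hilt : i < (V0 :: (X ++ [Vk] ++ M2)).length := by rw [hRlen]; omega
    have hilt1 : i + 1 < (V0 :: (X ++ [Vk] ++ M2)).length := by rw [hRlen]; omega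
    have c1 : cyc (V0 :: (X ++ [Vk] ++ M2)) i = W[i]'(by omega) := by
      rw [cyc, Nat.mod_eq_of_lt hilt]
      conv_lhs => rw [hWR]
      rw [List.getD_append _ _ _ _ (show i < W.length by omega)]
      exact List.getD_eq_getElem _ _ (by omega)
    have c2 : cyc (V0 :: (X ++ [Vk] ++ M2)) (i+1) = W[i+1]'(by omega) := by
      rw [cyc, Nat.mod_eq_of_lt hilt1]
      conv_lhs => rw [hWR]
      rw [List.getD_append _ _ _ _ (show i + 1 < W.length by omega)]
      exact List.getD_eq_getElem _ _ (by omega)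
    rw [c1, c2] at hnd
    exact g_antisym cc hcc O _ _ hnd
  rw [hrev]
  abel
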